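/- (Lemma 6.2, behavior as α → ∞.) Assume H_pp ≠ 0, and fix μ > 0. For every α > 0 one has h(α) ≥ μ·logdet(I + ((P_p + α·P_c)/n_pt)·H_pp H_pp†), and consequently h(α) tends to +∞ as α tends to +∞. -/

import Mathlib

open Matrix Filter
open scoped ComplexOrder

noncomputable section

/-- `Mat m n` : complex `m × n` matrix. -/
abbrev Mat (m n : ℕ) := Matrix (Fin m) (Fin n) ℂ

/-- `LD M = log det (I + M)` (real part of the determinant). -/
def LD {ι : Type*} [Fintype ι] [DecidableEq ι] (M : Matrix ι ι ℂ) : ℝ :=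
  Real.log ((1 + M).det.re)

/-- real trace. -/
def rTr {ι : Type*} [Fintype ι] (M : Matrix ι ι ℂ) : ℝ := M.trace.re

/-- `G = [H_pp  H_cp]`. -/
def Gmat {npt nct npr : ℕ} (Hpp : Mat npr npt) (Hcp : Mat npr nct) :
    Matrix (Fin npr) (Fin npt ⊕ Fin nct) ℂ :=
  fromCols Hpp Hcp

/-- `G_α = [H_pp  H_cp/√α]`. -/
def Galpha {npt nct npr : ℕ} (Hpp : Mat npr npt) (Hcp : Mat npr nct) (α : ℝ) :
    Matrix (Fin npr) (Fin npt ⊕ Fin nct) ℂ :=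
  fromCols Hpp (((Real.sqrt α : ℂ))⁻¹ • Hcp)

/-- The achievable region `R_in`. -/
def Rin {npt nct npr ncr : ℕ} (Hpp : Mat npr npt) (Hcp : Mat npr nct) (Hcc : Mat ncr nct)
    (Pp Pc : ℝ) : Set (ℝ × ℝ) :=
  closure (convexHull ℝ
    {R : ℝ × ℝ | 0 ≤ R.1 ∧ 0 ≤ R.2 ∧
      ∃ (Sp : Mat npt npt) (Scp Scc : Mat nct nct) (Q : Mat npt nct),
        Sp.PosSemidef ∧ Scp.PosSemidef ∧ Scc.PosSemidef ∧
        (fromBlocks Sp Q Qᴴ Scp).PosSemidef ∧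
        rTr Sp ≤ Pp ∧ rTr Scp + rTr Scc ≤ Pc ∧
        R.1 ≤ LD (Gmat Hpp Hcp * fromBlocks Sp Q Qᴴ Scp * (Gmat Hpp Hcp)ᴴ
                  + Hcp * Scc * Hcpᴴ)
              - LD (Hcp * Scc * Hcpᴴ) ∧
        R.2 ≤ LD (Hcc * Scc * Hccᴴ)})

/-- The partial outer bound region `R_part,out^α`. -/
def Rpart {npt nct npr ncr : ℕ} (Hpp : Mat npr npt) (Hcp : Mat npr nct) (Hcc : Mat ncr nct)
    (Pp Pc : ℝ) (α : ℝ) : Set (ℝ × ℝ) :=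
  closure (convexHull ℝ
    {R : ℝ × ℝ | 0 ≤ R.1 ∧ 0 ≤ R.2 ∧
      ∃ (Qp : Matrix (Fin npt ⊕ Fin nct) (Fin npt ⊕ Fin nct) ℂ) (Scc : Mat nct nct),
        Qp.PosSemidef ∧ Scc.PosSemidef ∧
        rTr Qp + rTr Scc ≤ Pp + α * Pc ∧
        R.1 ≤ LD (Galpha Hpp Hcp α * Qp * (Galpha Hpp Hcp α)ᴴ
                  + ((α : ℂ))⁻¹ • (Hcp * Scc * Hcpᴴ))
              - LD (((α : ℂ))⁻¹ • (Hcp * Scc * Hcpᴴ)) ∧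
        R.2 ≤ LD (((α : ℂ))⁻¹ • (Hcc * Scc * Hccᴴ))})

/-- Tuples in `R_ach,rate` (no power constraints). -/
def RachRate {npt nct npr ncr : ℕ} (Hpp : Mat npr npt) (Hcp : Mat npr nct) (Hcc : Mat ncr nct)
    (Rp Rc : ℝ) (Sp : Mat npt npt) (Scp Scc : Mat nct nct) (Q : Mat npt nct) : Prop :=
  0 ≤ Rp ∧ 0 ≤ Rc ∧ Sp.PosSemidef ∧ Scp.PosSemidef ∧ Scc.PosSemidef ∧
  (fromBlocks Sp Q Qᴴ Scp).PosSemidef ∧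
  Rp ≤ LD (Gmat Hpp Hcp * fromBlocks Sp Q Qᴴ Scp * (Gmat Hpp Hcp)ᴴ + Hcp * Scc * Hcpᴴ)
        - LD (Hcp * Scc * Hcpᴴ) ∧
  Rc ≤ LD (Hcc * Scc * Hccᴴ)

/-- The Lagrangian `L`. -/
def Lfun {npt nct : ℕ} (Pp Pc μ Rp Rc : ℝ) (Sp : Mat npt npt) (Scp Scc : Mat nct nct)
    (l1 l2 : ℝ) : ℝ :=
  μ * Rp + Rc - l1 * (rTr Sp - Pp) - l2 * (rTr Scp + rTr Scc - Pc)

/-- The Lagrangian `L₁`. -/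
def L1fun {npt nct : ℕ} (Pp Pc μ Rp Rc : ℝ) (Sp : Mat npt npt) (Scp Scc : Mat nct nct)
    (l α : ℝ) : ℝ :=
  μ * Rp + Rc - l * (rTr Sp + α * rTr Scp + α * rTr Scc - Pp - α * Pc)

/-- `K = [0  H_cc/√α]`. -/
def Kmat (npt : ℕ) {nct ncr : ℕ} (Hcc : Mat ncr nct) (α : ℝ) :
    Matrix (Fin ncr) (Fin npt ⊕ Fin nct) ℂ :=
  fromCols 0 (((Real.sqrt α : ℂ))⁻¹ • Hcc)

/-- `K̄ = [[H_pp, H_cp/√α],[0, H_cc/√α]]`. -/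
def Kbar {npt nct npr ncr : ℕ} (Hpp : Mat npr npt) (Hcp : Mat npr nct) (Hcc : Mat ncr nct)
    (α : ℝ) : Matrix (Fin npr ⊕ Fin ncr) (Fin npt ⊕ Fin nct) ℂ :=
  fromBlocks Hpp (((Real.sqrt α : ℂ))⁻¹ • Hcp) 0 (((Real.sqrt α : ℂ))⁻¹ • Hcc)

/-- The region `R₁^α` (licensed user encoded first). -/
def R1reg {npt nct npr ncr : ℕ} (Hpp : Mat npr npt) (Hcp : Mat npr nct) (Hcc : Mat ncr nct)
    (Pp Pc : ℝ) (α : ℝ) : Set (ℝ × ℝ) :=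
  closure (convexHull ℝ
    {R : ℝ × ℝ | 0 ≤ R.1 ∧ 0 ≤ R.2 ∧
      ∃ Qp Qc : Matrix (Fin npt ⊕ Fin nct) (Fin npt ⊕ Fin nct) ℂ,
        Qp.PosSemidef ∧ Qc.PosSemidef ∧ rTr Qp + rTr Qc ≤ Pp + α * Pc ∧
        R.1 ≤ LD (Galpha Hpp Hcp α * Qp * (Galpha Hpp Hcp α)ᴴ
                  + Galpha Hpp Hcp α * Qc * (Galpha Hpp Hcp α)ᴴ)
              - LD (Galpha Hpp Hcp α * Qc * (Galpha Hpp Hcp α)ᴴ) ∧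
        R.2 ≤ LD (Kmat npt Hcc α * Qc * (Kmat npt Hcc α)ᴴ)})

/-- The region `R₂^α` (cognitive user encoded first). -/
def R2reg {npt nct npr ncr : ℕ} (Hpp : Mat npr npt) (Hcp : Mat npr nct) (Hcc : Mat ncr nct)
    (Pp Pc : ℝ) (α : ℝ) : Set (ℝ × ℝ) :=
  closure (convexHull ℝ
    {R : ℝ × ℝ | 0 ≤ R.1 ∧ 0 ≤ R.2 ∧
      ∃ Qp Qc : Matrix (Fin npt ⊕ Fin nct) (Fin npt ⊕ Fin nct) ℂ,
        Qp.PosSemidef ∧ Qc.PosSemidef ∧ rTr Qp + rTr Qc ≤ Pp + α * Pc ∧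
        R.1 ≤ LD (Galpha Hpp Hcp α * Qp * (Galpha Hpp Hcp α)ᴴ) ∧
        R.2 ≤ LD (Kmat npt Hcc α * Qp * (Kmat npt Hcc α)ᴴ
                  + Kmat npt Hcc α * Qc * (Kmat npt Hcc α)ᴴ)
              - LD (Kmat npt Hcc α * Qp * (Kmat npt Hcc α)ᴴ)})

/-- The dirty-paper-coding region `D^α`. -/
def Dreg {npt nct npr ncr : ℕ} (Hpp : Mat npr npt) (Hcp : Mat npr nct) (Hcc : Mat ncr nct)
    (Pp Pc : ℝ) (α : ℝ) : Set (ℝ × ℝ) :=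
  closure (convexHull ℝ
    (R1reg Hpp Hcp Hcc Pp Pc α ∪ R2reg Hpp Hcp Hcc Pp Pc α))

/-- `Σ_z = [[I, Q_z],[Q_z†, I]]`. -/
def Sigmaz {npr ncr : ℕ} (Qz : Mat npr ncr) :
    Matrix (Fin npr ⊕ Fin ncr) (Fin npr ⊕ Fin ncr) ℂ :=
  fromBlocks 1 Qz Qzᴴ 1

/-- The outer bound region `R_out^{α,Σ_z}`. -/
def Rout {npt nct npr ncr : ℕ} (Hpp : Mat npr npt) (Hcp : Mat npr nct) (Hcc : Mat ncr nct)
    (Pp Pc : ℝ) (α : ℝ) (Qz : Mat npr ncr) : Set (ℝ × ℝ) :=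
  closure (convexHull ℝ
    {R : ℝ × ℝ | 0 ≤ R.1 ∧ 0 ≤ R.2 ∧
      ∃ Qp Qc : Matrix (Fin npt ⊕ Fin nct) (Fin npt ⊕ Fin nct) ℂ,
        Qp.PosSemidef ∧ Qc.PosSemidef ∧ rTr Qp + rTr Qc ≤ Pp + α * Pc ∧
        R.1 ≤ LD (Galpha Hpp Hcp α * Qp * (Galpha Hpp Hcp α)ᴴ
                  + Galpha Hpp Hcp α * Qc * (Galpha Hpp Hcp α)ᴴ)
              - LD (Galpha Hpp Hcp α * Qc * (Galpha Hpp Hcp α)ᴴ) ∧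
        R.2 ≤ Real.log ((Sigmaz Qz + Kbar Hpp Hcp Hcc α * Qc * (Kbar Hpp Hcp Hcc α)ᴴ).det.re)
              - Real.log ((Sigmaz Qz).det.re)})

lemma det_one_add_smul_eigen {ι : Type*} [Fintype ι] [DecidableEq ι] {M : Matrix ι ι ℂ}
    (hM : M.IsHermitian) (c : ℝ) :
    (1 + (c : ℂ) • M).det = ((∏ i, (1 + c * hM.eigenvalues i) : ℝ) : ℂ) := by
  set U : Matrix ι ι ℂ := (hM.eigenvectorUnitary : Matrix ι ι ℂ) with hUdef
  set D : Matrix ι ι ℂ := diagonal (RCLike.ofReal ∘ hM.eigenvalues) with hDdef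
  have hUU : U * star U = 1 := mem_unitaryGroup_iff.mp hM.eigenvectorUnitary.2
  have hdiag : diagonal (fun i => ((1 + c * hM.eigenvalues i : ℝ) : ℂ))
      = 1 + (c : ℂ) • D := by
    rw [hDdef]
    ext i j
    by_cases h : i = j <;>
      simp [h, diagonal_apply, one_apply, Matrix.add_apply, RCLike.ofReal]
  have hdecomp : (1 : Matrix ι ι ℂ) + (c : ℂ) • M = U * (1 + (c : ℂ) • D) * star U := by
    conv_lhs => rw [hM.spectral_theorem, Unitary.conjStarAlgAut_apply]
    rw [mul_add, add_mul, mul_one, hUU, mul_smul_comm, smul_mul_assoc]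
  have hdetU : U.det * star U.det = 1 :=
    (Unitary.mem_iff.mp (det_of_mem_unitary hM.eigenvectorUnitary.2)).2
  rw [hdecomp, det_mul, det_mul, ← hdiag]
  have hst : (star U).det = star U.det := det_conjTranspose U
  rw [hst, mul_comm U.det, mul_assoc, hdetU, mul_one, det_diagonal]
  push_cast
  rfl

theorem statement8 {npt nct npr ncr : ℕ}
    (hnpt : 0 < npt) (hnct : 0 < nct) (hnpr : 0 < npr) (hncr : 0 < ncr)
    (Hpp : Mat npr npt) (hHpp : Hpp ≠ 0) (Hcp : Mat npr nct) (Hcc : Mat ncr nct)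
    (Pp Pc : ℝ) (hPp : 0 < Pp) (hPc : 0 < Pc) (μ : ℝ) (hμ : 0 < μ) :
    (∀ α : ℝ, 0 < α →
      ((μ * LD (((((Pp + α * Pc) / npt : ℝ)) : ℂ) • (Hpp * Hppᴴ)) : ℝ) : EReal) ≤
        ⨆ R ∈ Rpart Hpp Hcp Hcc Pp Pc α, ((μ * R.1 + R.2 : ℝ) : EReal))
    ∧
    Tendsto (fun α : ℝ => ⨆ R ∈ Rpart Hpp Hcp Hcc Pp Pc α, ((μ * R.1 + R.2 : ℝ) : EReal))
      atTop (nhds (⊤ : EReal)) := by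
  set M := Hpp * Hppᴴ with hMdef
  have hMpsd : M.PosSemidef := posSemidef_self_mul_conjTranspose Hpp
  have hMh := hMpsd.1
  set lam := hMh.eigenvalues with hlamdef
  have hlam0 : ∀ i, 0 ≤ lam i := hMpsd.eigenvalues_nonneg
  have hnptR : (0:ℝ) < (npt:ℝ) := by exact_mod_cast hnpt
  have hLD : ∀ c : ℝ, LD ((c:ℂ) • M) = Real.log (∏ i, (1 + c * lam i)) := by
    intro c; rw [LD, det_one_add_smul_eigen hMh c, Complex.ofReal_re]
  have hfac : ∀ (c:ℝ), 0 ≤ c → ∀ i, (1:ℝ) ≤ 1 + c * lam i :=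
    fun c hc i => le_add_of_nonneg_right (mul_nonneg hc (hlam0 i))
  have hprod1 : ∀ c:ℝ, 0 ≤ c → (1:ℝ) ≤ ∏ i, (1 + c * lam i) := by
    intro c hc
    calc (1:ℝ) = ∏ _i : Fin npr, (1:ℝ) := by simp
    _ ≤ ∏ i, (1 + c * lam i) :=
        Finset.prod_le_prod (fun i _ => by norm_num) (fun i _ => hfac c hc i)
  have hsingle : ∀ c:ℝ, 0 ≤ c → ∀ i₀, (1 + c * lam i₀) ≤ ∏ i, (1 + c * lam i) := by
    intro c hc i₀
    have h := Finset.prod_le_prod (s := Finset.univ)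
      (f := fun i => if i = i₀ then 1 + c * lam i else 1)
      (g := fun i => 1 + c * lam i)
      (fun i _ => by
        by_cases h : i = i₀
        · simp only [h, if_pos]; linarith [hfac c hc i₀]
        · simp [h])
      (fun i _ => by
        by_cases h : i = i₀
        · simp [h]
        · simp only [h, if_neg, ite_false]; exact hfac c hc i)
    simpa using h
  have hkey : ∀ α : ℝ, 0 < α →
      ((μ * LD (((((Pp + α * Pc) / npt : ℝ)) : ℂ) • M) : ℝ) : EReal) ≤
        ⨆ R ∈ Rpart Hpp Hcp Hcc Pp Pc α, ((μ * R.1 + R.2 : ℝ) : EReal) := by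
    intro α hα
    set c : ℝ := (Pp + α*Pc)/npt with hcdef
    have hc0 : 0 ≤ c := by positivity
    set r : ℝ := Real.sqrt c with hrdef
    have hr2 : (r:ℂ) * (r:ℂ) = (c:ℂ) := by
      rw [← Complex.ofReal_mul]; norm_cast; exact Real.mul_self_sqrt hc0
    set B : Matrix (Fin npt) (Fin npt ⊕ Fin nct) ℂ := fromCols ((r:ℂ) • 1) 0 with hBdef
    have hBH : Bᴴ = fromRows ((r:ℂ) • 1) 0 := by
      rw [hBdef, conjTranspose_fromCols_eq_fromRows_conjTranspose]
      simp [conjTranspose_smul, Complex.star_def, Complex.conj_ofReal]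
    set Qp := Bᴴ * B with hQpdef
    have hQpPSD : Qp.PosSemidef := posSemidef_conjTranspose_mul_self B
    have hBBH : B * Bᴴ = (c:ℂ) • 1 := by
      rw [hBH, hBdef, fromCols_mul_fromRows]
      rw [Matrix.mul_zero, add_zero, Matrix.smul_mul, Matrix.mul_smul, Matrix.one_mul,
        smul_smul, hr2]
    have htr : rTr Qp = Pp + α * Pc := by
      rw [hQpdef, rTr, trace_mul_comm, hBBH, trace_smul, trace_one]
      simp only [smul_eq_mul, Complex.mul_re, Complex.ofReal_re, Complex.ofReal_im,
        Complex.natCast_re, Complex.natCast_im]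
      rw [hcdef]
      field_simp
      simp
    have hGB : Galpha Hpp Hcp α * Bᴴ = (r:ℂ) • Hpp := by
      rw [Galpha, hBH, fromCols_mul_fromRows, Matrix.mul_zero, add_zero,
        Matrix.mul_smul, Matrix.mul_one]
    have hGQG : Galpha Hpp Hcp α * Qp * (Galpha Hpp Hcp α)ᴴ = (c:ℂ) • M := by
      rw [hQpdef, ← Matrix.mul_assoc (Galpha Hpp Hcp α) Bᴴ B,
        Matrix.mul_assoc (Galpha Hpp Hcp α * Bᴴ) B]
      have hBG : B * (Galpha Hpp Hcp α)ᴴ = (Galpha Hpp Hcp α * Bᴴ)ᴴ := by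
        rw [conjTranspose_mul, conjTranspose_conjTranspose]
      rw [hBG, hGB, conjTranspose_smul, Matrix.smul_mul, Matrix.mul_smul, smul_smul,
        Complex.star_def, Complex.conj_ofReal, hr2, hMdef]
    set R₀ : ℝ × ℝ := (LD ((c:ℂ) • M), (0:ℝ)) with hR₀def
    have hLD0 : ∀ {k : ℕ}, LD (0 : Mat k k) = 0 := by
      intro k; simp [LD]
    have hmem : R₀ ∈ Rpart Hpp Hcp Hcc Pp Pc α := by
      apply subset_closure
      apply subset_convexHull
      refine ⟨?_, le_refl 0, Qp, 0, hQpPSD, Matrix.PosSemidef.zero, ?_, ?_, ?_⟩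
      · show 0 ≤ LD ((c:ℂ) • M)
        rw [hLD]; exact Real.log_nonneg (hprod1 c hc0)
      · rw [htr, rTr, trace_zero]; simp
      · show LD ((c:ℂ) • M) ≤ _
        rw [Matrix.mul_zero, Matrix.zero_mul, smul_zero, add_zero, hGQG, hLD0, sub_zero]
      · show (0:ℝ) ≤ _
        rw [Matrix.mul_zero, Matrix.zero_mul, smul_zero, hLD0]
    have hb := le_biSup (fun R : ℝ × ℝ => ((μ * R.1 + R.2 : ℝ) : EReal)) hmem
    simp only [hR₀def, add_zero] at hb
    exact_mod_cast hb
  refine ⟨hkey, ?_⟩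
  have hex : ∃ i₀, 0 < lam i₀ := by
    by_contra h
    push_neg at h
    have hz : ∀ i, lam i = 0 := fun i => le_antisymm (h i) (hlam0 i)
    have hd : diagonal (RCLike.ofReal ∘ lam) = (0 : Mat npr npr) := by
      rw [show RCLike.ofReal ∘ lam = (fun _ => (0:ℂ)) from funext fun i => by
        simp [Function.comp, hz i]]
      exact diagonal_zero
    have hM0 : M = 0 := by
      rw [hMh.spectral_theorem, Unitary.conjStarAlgAut_apply]
      rw [show diagonal (RCLike.ofReal ∘ hMh.eigenvalues) = (0 : Mat npr npr) from hd]
      rw [Matrix.mul_zero, Matrix.zero_mul]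
    exact hHpp (self_mul_conjTranspose_eq_zero.mp hM0)
  obtain ⟨i₀, hi₀⟩ := hex
  rw [EReal.tendsto_nhds_top_iff_real]
  intro x
  have h1 : Tendsto (fun α : ℝ => 1 + ((Pp + α*Pc)/npt) * lam i₀) atTop atTop := by
    apply tendsto_atTop_add_const_left
    apply Tendsto.atTop_mul_const hi₀
    apply Tendsto.atTop_div_const hnptR
    apply tendsto_atTop_add_const_left
    exact tendsto_id.atTop_mul_const hPc
  have h2 : Tendsto (fun α : ℝ => μ * Real.log (1 + ((Pp + α*Pc)/npt) * lam i₀))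
      atTop atTop := (Real.tendsto_log_atTop.comp h1).const_mul_atTop hμ
  filter_upwards [h2.eventually_gt_atTop x, eventually_gt_atTop (0:ℝ)] with α hxα hα0
  refine lt_of_lt_of_le ?_ (hkey α hα0)
  have hc0 : (0:ℝ) ≤ (Pp + α*Pc)/npt := by positivity
  have hle : μ * Real.log (1 + ((Pp + α*Pc)/npt) * lam i₀)
      ≤ μ * LD (((((Pp + α * Pc) / npt : ℝ)) : ℂ) • M) := by
    apply mul_le_mul_of_nonneg_left _ hμ.le
    rw [hLD]
    apply Real.log_le_log
    · have := mul_nonneg hc0 (hlam0 i₀); linarith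
    · exact hsingle _ hc0 i₀
  exact_mod_cast lt_of_lt_of_le hxα hle

end
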